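/- If w ∈ S_n satisfies w < s_i w and L(w) ⊄ L(s_i w), then w^{−1} and w^{−1} s_i have the same P-symbol: P(w^{−1}) = P(w^{−1} s_i). -/

import Mathlib

open Polynomial

noncomputable section

namespace KLPaper

open scoped Classical

/-! ### The symmetric group, simple transpositions, length and Bruhat order -/

/-- The simple transposition `sᵢ = (i, i+1)` (`0`-indexed) in the symmetric group on
`{0, …, n-1}`; junk value `1` if `i` is out of range. -/
def s (n i : ℕ) : Equiv.Perm (Fin n) :=
  if h : i + 1 < n then Equiv.swap ⟨i, Nat.lt_of_succ_lt h⟩ ⟨i + 1, h⟩ else 1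

/-- The Coxeter length of a permutation: the minimal length of an expression as a
product of adjacent transpositions. -/
def len (n : ℕ) (w : Equiv.Perm (Fin n)) : ℕ :=
  sInf { r | ∃ l : List ℕ, (∀ i ∈ l, i + 1 < n) ∧ l.length = r ∧ (l.map (s n)).prod = w }

/-- The Bruhat order on the symmetric group: `y ≤ w` iff there is a chain from `y` to `w`
each of whose steps multiplies by a transposition and increases the length. -/
def bruhatLE (n : ℕ) : Equiv.Perm (Fin n) → Equiv.Perm (Fin n) → Prop :=
  Relation.ReflTransGen
    (fun a b => (∃ t : Equiv.Perm (Fin n), t.IsSwap ∧ b = a * t) ∧ len n a < len n b)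

/-- Strict Bruhat order. -/
def bruhatLT (n : ℕ) (y w : Equiv.Perm (Fin n)) : Prop := bruhatLE n y w ∧ y ≠ w

/-- The left descent set `L(w) = {i : sᵢ w < w}` (recorded via indices `i`). -/
def LD (n : ℕ) (w : Equiv.Perm (Fin n)) : Set ℕ :=
  {i | i + 1 < n ∧ len n (s n i * w) < len n w}

/-- The right descent set `R(w) = {i : w sᵢ < w}` (recorded via indices `i`). -/
def RD (n : ℕ) (w : Equiv.Perm (Fin n)) : Set ℕ :=
  {i | i + 1 < n ∧ len n (w * s n i) < len n w}

/-! ### The Hecke algebra over ℚ(q^{1/2}) -/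

/-- The field `ℚ(v)` of rational functions; we regard `v = q^{1/2}`. -/
abbrev F : Type := RatFunc ℚ

/-- `v = q^{1/2}`. -/
def v : F := RatFunc.X

/-- The Hecke algebra parameter `q = v²`. -/
def qq : F := v ^ 2

/-- The defining relations of the Hecke algebra `H_n`:
`(Tᵢ - q)(Tᵢ + 1) = 0`, the braid relations, and commutation at distance `≥ 2`. -/
inductive HeckeRel (n : ℕ) :
    FreeAlgebra F {i : ℕ // i + 1 < n} → FreeAlgebra F {i : ℕ // i + 1 < n} → Prop
  | quad (i : {i : ℕ // i + 1 < n}) :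
      HeckeRel n (FreeAlgebra.ι F i * FreeAlgebra.ι F i)
        ((qq - 1) • FreeAlgebra.ι F i + algebraMap F _ qq)
  | braid (i j : {i : ℕ // i + 1 < n}) (h : (j : ℕ) = (i : ℕ) + 1) :
      HeckeRel n (FreeAlgebra.ι F i * FreeAlgebra.ι F j * FreeAlgebra.ι F i)
        (FreeAlgebra.ι F j * FreeAlgebra.ι F i * FreeAlgebra.ι F j)
  | comm (i j : {i : ℕ // i + 1 < n}) (h : (i : ℕ) + 2 ≤ (j : ℕ)) :
      HeckeRel n (FreeAlgebra.ι F i * FreeAlgebra.ι F j)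
        (FreeAlgebra.ι F j * FreeAlgebra.ι F i)

/-- The Hecke algebra `H_n` of the symmetric group `Sₙ` over `ℚ(q^{1/2})`. -/
abbrev Hecke (n : ℕ) := RingQuot (HeckeRel n)

/-- The generator `Tᵢ` of the Hecke algebra (junk value `1` if `i` out of range). -/
def T (n i : ℕ) : Hecke n :=
  if h : i + 1 < n then RingQuot.mkAlgHom F (HeckeRel n) (FreeAlgebra.ι F ⟨i, h⟩) else 1

/-- `l` is a word in the simple transpositions with product `w`. -/
def IsWordOf (n : ℕ) (w : Equiv.Perm (Fin n)) (l : List ℕ) : Prop :=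
  (∀ i ∈ l, i + 1 < n) ∧ (l.map (s n)).prod = w

/-- The standard basis element `T_w` of the Hecke algebra: the product `T_{i₁} ⋯ T_{i_r}`
over a reduced expression `w = s_{i₁} ⋯ s_{i_r}` (independent of the choice, by
Matsumoto's theorem). -/
def Tw (n : ℕ) (w : Equiv.Perm (Fin n)) : Hecke n :=
  if h : ∃ l : List ℕ, IsWordOf n w l ∧ l.length = len n w then
    ((Classical.choose h).map (T n)).prod
  else 0

/-! ### Kazhdan–Lusztig polynomials -/

/-- `C_w = Σ_{y ≤ w} (−1)^{l(w)−l(y)} q^{l(w)/2−l(y)} P_{y,w}(q^{−1}) T_y`,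
for a candidate family `P` of Kazhdan–Lusztig polynomials. -/
def Cw (n : ℕ) (P : Equiv.Perm (Fin n) → Equiv.Perm (Fin n) → Polynomial ℤ)
    (w : Equiv.Perm (Fin n)) : Hecke n :=
  ∑ y ∈ Finset.univ.filter (fun y => bruhatLE n y w),
    ((-1 : F) ^ (len n w - len n y) * (v ^ len n w / qq ^ len n y) *
      Polynomial.aeval qq⁻¹ (P y w)) • Tw n y

/-- `Σ_{y ≤ w} (−1)^{l(w)−l(y)} q^{−l(w)/2+l(y)} P_{y,w}(q) (T_{y⁻¹})⁻¹`: the image of `C_w`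
under the bar involution. -/
def CwBar (n : ℕ) (P : Equiv.Perm (Fin n) → Equiv.Perm (Fin n) → Polynomial ℤ)
    (w : Equiv.Perm (Fin n)) : Hecke n :=
  ∑ y ∈ Finset.univ.filter (fun y => bruhatLE n y w),
    ((-1 : F) ^ (len n w - len n y) * (qq ^ len n y / v ^ len n w) *
      Polynomial.aeval qq (P y w)) • Ring.inverse (Tw n y⁻¹)

/-- The defining conditions of the Kazhdan–Lusztig polynomials `P_{y,w}(q) ∈ ℤ[q]` (`y ≤ w`):
`P_{w,w} = 1`, `deg P_{y,w} ≤ (l(w)−l(y)−1)/2` for `y < w`, and the bar-invariance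
`C_w = Σ_{y≤w} (−1)^{l(w)−l(y)} q^{−l(w)/2+l(y)} P_{y,w}(q) (T_{y⁻¹})⁻¹`.
(By convention `P_{y,w} = 0` unless `y ≤ w`.) These conditions determine `P` uniquely. -/
structure IsKL (n : ℕ)
    (P : Equiv.Perm (Fin n) → Equiv.Perm (Fin n) → Polynomial ℤ) : Prop where
  not_le : ∀ y w, ¬ bruhatLE n y w → P y w = 0
  self : ∀ w, P w w = 1
  deg : ∀ y w, bruhatLT n y w → (P y w).degree ≤ ((len n w - len n y - 1) / 2 : ℕ)
  bar : ∀ w, Cw n P w = CwBar n P w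

/-- `μ(y,w)`: the coefficient of `q^{(l(w)−l(y)−1)/2}` in `P_{y,w}`, defined (possibly nonzero)
only when `(l(w)−l(y)−1)/2` is a nonnegative integer, i.e. `l(w) − l(y)` is odd. -/
def mu (n : ℕ) (P : Equiv.Perm (Fin n) → Equiv.Perm (Fin n) → Polynomial ℤ)
    (y w : Equiv.Perm (Fin n)) : ℤ :=
  if (len n w - len n y) % 2 = 1 then (P y w).coeff ((len n w - len n y - 1) / 2) else 0

/-- `μ(y|w) ≠ 0`:  `y < w` and `μ(y,w) ≠ 0`, or `y > w` and `μ(w,y) ≠ 0`. -/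
def muSym (n : ℕ) (P : Equiv.Perm (Fin n) → Equiv.Perm (Fin n) → Polynomial ℤ)
    (y w : Equiv.Perm (Fin n)) : Prop :=
  (bruhatLT n y w ∧ mu n P y w ≠ 0) ∨ (bruhatLT n w y ∧ mu n P w y ≠ 0)

/-! ### Cells -/

/-- `y ≤_L w`: there is a chain `y = x₁, …, x_r = w` with `L(x_k) ⊄ L(x_{k+1})` and
`μ(x_k|x_{k+1}) ≠ 0` for all `k`. -/
def leL (n : ℕ) (P : Equiv.Perm (Fin n) → Equiv.Perm (Fin n) → Polynomial ℤ) :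
    Equiv.Perm (Fin n) → Equiv.Perm (Fin n) → Prop :=
  Relation.ReflTransGen (fun a b => ¬ LD n a ⊆ LD n b ∧ muSym n P a b)

/-- `y ≤_R w`: there is a chain `y = x₁, …, x_r = w` with `R(x_k) ⊄ R(x_{k+1})` and
`μ(x_k|x_{k+1}) ≠ 0` for all `k`. -/
def leR (n : ℕ) (P : Equiv.Perm (Fin n) → Equiv.Perm (Fin n) → Polynomial ℤ) :
    Equiv.Perm (Fin n) → Equiv.Perm (Fin n) → Prop :=
  Relation.ReflTransGen (fun a b => ¬ RD n a ⊆ RD n b ∧ muSym n P a b)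

/-- `y ∼_L w`: `y` and `w` lie in the same left cell. -/
def simL (n : ℕ) (P : Equiv.Perm (Fin n) → Equiv.Perm (Fin n) → Polynomial ℤ)
    (y w : Equiv.Perm (Fin n)) : Prop :=
  leL n P y w ∧ leL n P w y

/-- `y ∼_R w`: `y` and `w` lie in the same right cell. -/
def simR (n : ℕ) (P : Equiv.Perm (Fin n) → Equiv.Perm (Fin n) → Polynomial ℤ)
    (y w : Equiv.Perm (Fin n)) : Prop :=
  leR n P y w ∧ leR n P w y

/-! ### The specialization q = 1 : the group algebra ℚSₙ -/

/-- `a(w) ∈ ℚSₙ`: the specialization of `C_w` at `q = 1`, namely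
`a(w) = Σ_{y ≤ w} (−1)^{l(w)−l(y)} P_{y,w}(1) · y`. -/
def aElt (n : ℕ) (P : Equiv.Perm (Fin n) → Equiv.Perm (Fin n) → Polynomial ℤ)
    (w : Equiv.Perm (Fin n)) : MonoidAlgebra ℚ (Equiv.Perm (Fin n)) :=
  ∑ y ∈ Finset.univ.filter (fun y => bruhatLE n y w),
    (((-1 : ℚ) ^ (len n w - len n y)) * (((P y w).eval 1 : ℤ) : ℚ)) •
      MonoidAlgebra.of ℚ (Equiv.Perm (Fin n)) y

/-- `V̄_w^L`: the smallest left ideal of `ℚSₙ` containing `a(w)` and spanned (over `ℚ`)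
by a subset of `{a(x)}`. -/
def Vbar (n : ℕ) (P : Equiv.Perm (Fin n) → Equiv.Perm (Fin n) → Polynomial ℤ)
    (w : Equiv.Perm (Fin n)) :
    Submodule (MonoidAlgebra ℚ (Equiv.Perm (Fin n))) (MonoidAlgebra ℚ (Equiv.Perm (Fin n))) :=
  sInf {I | aElt n P w ∈ I ∧ ∃ S : Set (Equiv.Perm (Fin n)),
    (I : Set (MonoidAlgebra ℚ (Equiv.Perm (Fin n)))) =
      (Submodule.span ℚ (aElt n P '' S) : Set (MonoidAlgebra ℚ (Equiv.Perm (Fin n))))}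

/-! ### Knuth moves and distinguished coset representatives -/

/-- `y` and `w` are in Knuth relation: for some position `j` (0-indexed), either
`y_{j+1} < y_j < y_{j+2}` and `w` is `y` with positions `j+1, j+2` exchanged, or
`y_{j+1} < y_{j+2} < y_j` and `w` is `y` with positions `j, j+1` exchanged. -/
def KnuthStep (n : ℕ) (y w : Equiv.Perm (Fin n)) : Prop :=
  ∃ (j : ℕ) (h2 : j + 2 < n),
    (y ⟨j + 1, Nat.lt_of_succ_lt h2⟩ < y ⟨j, Nat.lt_of_succ_lt (Nat.lt_of_succ_lt h2)⟩ ∧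
      y ⟨j, Nat.lt_of_succ_lt (Nat.lt_of_succ_lt h2)⟩ < y ⟨j + 2, h2⟩ ∧
      w = y * Equiv.swap ⟨j + 1, Nat.lt_of_succ_lt h2⟩ ⟨j + 2, h2⟩) ∨
    (y ⟨j + 1, Nat.lt_of_succ_lt h2⟩ < y ⟨j + 2, h2⟩ ∧
      y ⟨j + 2, h2⟩ < y ⟨j, Nat.lt_of_succ_lt (Nat.lt_of_succ_lt h2)⟩ ∧
      w = y * Equiv.swap ⟨j, Nat.lt_of_succ_lt (Nat.lt_of_succ_lt h2)⟩
            ⟨j + 1, Nat.lt_of_succ_lt h2⟩)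

/-- `y0` is the minimal-length representative of the right coset `y⟨sᵢ, sⱼ⟩`. -/
def IsMinRep (n i j : ℕ) (y0 y : Equiv.Perm (Fin n)) : Prop :=
  (∃ u ∈ Subgroup.closure ({s n i, s n j} : Set (Equiv.Perm (Fin n))), y = y0 * u) ∧
  ∀ u ∈ Subgroup.closure ({s n i, s n j} : Set (Equiv.Perm (Fin n))),
    len n y0 ≤ len n (y0 * u)

/-- `Ky = K_{ij}(y)`: with `y⁰` the minimal-length representative of `y⟨sᵢ, sⱼ⟩`, either
`y = y⁰sᵢ` and `Ky = y⁰sᵢsⱼ`, or `y = y⁰sⱼsᵢ` and `Ky = y⁰sⱼ`. -/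
def IsKnuthImage (n i j : ℕ) (y Ky : Equiv.Perm (Fin n)) : Prop :=
  ∃ y0 : Equiv.Perm (Fin n), IsMinRep n i j y0 y ∧
    ((y = y0 * s n i ∧ Ky = y0 * s n i * s n j) ∨
     (y = y0 * s n j * s n i ∧ Ky = y0 * s n j))

/-- `w ∈ D_{ij}`, i.e. `w sᵢ < w < w sⱼ`. -/
def memD (n i j : ℕ) (w : Equiv.Perm (Fin n)) : Prop :=
  bruhatLT n (w * s n i) w ∧ bruhatLT n w (w * s n j)

/-! ### Robinson–Schensted insertion -/

/-- Insert `k` into a row by Schensted bumping: replace the leftmost entry `> k` by `k`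
(returning the bumped entry), or append `k` at the end of the row. -/
def rowInsert (r : List ℕ) (k : ℕ) : List ℕ × Option ℕ :=
  match r.findIdx? (fun x => decide (k < x)) with
  | none => (r ++ [k], none)
  | some j => (r.set j k, some (r.getD j 0))

/-- Schensted row insertion `T ← k` of `k` into a tableau `T` (given by its list of rows). -/
def insertT : List (List ℕ) → ℕ → List (List ℕ)
  | [], k => [[k]]
  | r :: rest, k =>
    match rowInsert r k with
    | (r', none) => r' :: rest
    | (r', some b) => r' :: insertT rest b

/-- The word `w₁ ⋯ w_n` (with values in `{1, …, n}`) of a permutation `w ∈ Sₙ`. -/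
def word (n : ℕ) (w : Equiv.Perm (Fin n)) : List ℕ :=
  (List.finRange n).map (fun i => (w i : ℕ) + 1)

/-- The P-symbol of `w`:  `P(w) = ∅ ← w₁ ← ⋯ ← w_n` (row-insert the word of `w`). -/
def Psymb (n : ℕ) (w : Equiv.Perm (Fin n)) : List (List ℕ) :=
  (word n w).foldl insertT []

/-- The Q-symbol of `w`:  `Q(w) = P(w⁻¹)`. -/
def Qsymb (n : ℕ) (w : Equiv.Perm (Fin n)) : List (List ℕ) :=
  Psymb n w⁻¹

/-- Schensted column insertion `k → T`: row insertion with the roles of rows and columns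
interchanged. -/
def colInsert (T : List (List ℕ)) (k : ℕ) : List (List ℕ) :=
  (insertT T.transpose k).transpose

/-! ### Special tableaux and words attached to a partition (given by column lengths) -/

/-- The word consisting of consecutive decreasing blocks
`l₁, …, 1, l₁+l₂, …, l₁+1, …` determined by the column lengths `l₁, l₂, …`. -/
def blockWord : List ℕ → ℕ → List ℕ
  | [], _ => []
  | l :: rest, offset =>
      ((List.range l).map (fun j => offset + l - j)) ++ blockWord rest (offset + l)

/-- The columns of the tableau `P_π`: the `i`-th column contains
`l₁+⋯+l_{i−1}+1, …, l₁+⋯+l_i` from top to bottom. -/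
def colsOf : List ℕ → ℕ → List (List ℕ)
  | [], _ => []
  | l :: rest, offset =>
      ((List.range l).map (fun j => offset + j + 1)) :: colsOf rest (offset + l)

/-- The standard tableau `P_π` (as a list of rows) attached to a partition `π` with
column lengths `L = [l₁, l₂, …]`. -/
def Ptab (L : List ℕ) : List (List ℕ) :=
  (colsOf L 0).transpose

end KLPaper

namespace KLProof
open KLPaper

def ins1 : List ℕ → ℕ → List ℕ × Option ℕ
  | [], k => ([k], none)
  | a :: r, k => if k < a then (k :: r, some a) else (a :: (ins1 r k).1, (ins1 r k).2)

@[simp] lemma ins1_nil (k : ℕ) : ins1 [] k = ([k], none) := rfl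

lemma ins1_cons_lt {k a : ℕ} (h : k < a) (r : List ℕ) :
    ins1 (a :: r) k = (k :: r, some a) := by simp [ins1, h]

lemma ins1_cons_ge {k a : ℕ} (h : ¬ k < a) (r : List ℕ) :
    ins1 (a :: r) k = (a :: (ins1 r k).1, (ins1 r k).2) := by simp [ins1, h]

lemma rowInsert_eq_ins1 (r : List ℕ) (k : ℕ) : rowInsert r k = ins1 r k := by
  induction r with
  | nil => simp [rowInsert, ins1]
  | cons a r IH =>
    by_cases h : k < a
    · rw [ins1_cons_lt h]
      unfold rowInsert
      rw [List.findIdx?_cons]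
      simp [h]
    · rw [ins1_cons_ge h, ← IH]
      unfold rowInsert
      rw [List.findIdx?_cons]
      simp only [h, decide_eq_false, Bool.false_eq_true, if_false]
      rcases hf : List.findIdx? (fun x => decide (k < x)) r with _ | j
      · simp
      · simp

lemma insertT_nil (k : ℕ) : insertT [] k = [[k]] := rfl

lemma insertT_cons (r : List ℕ) (rest : List (List ℕ)) (k : ℕ) :
    insertT (r :: rest) k = (ins1 r k).1 :: ((ins1 r k).2.elim rest (insertT rest)) := by
  rw [insertT, rowInsert_eq_ins1]
  rcases h : ins1 r k with ⟨r', _ | b⟩ <;> simp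

/-- insert a list of values into a row, returning final row and the list of bumped values. -/
def ins1L : List ℕ → List ℕ → List ℕ × List ℕ
  | r, [] => (r, [])
  | r, k :: ks =>
    ((ins1L (ins1 r k).1 ks).1, (ins1 r k).2.elim (ins1L (ins1 r k).1 ks).2
      (· :: (ins1L (ins1 r k).1 ks).2))

@[simp] lemma ins1L_nil (r : List ℕ) : ins1L r [] = (r, []) := rfl

lemma ins1L_cons (r : List ℕ) (k : ℕ) (ks : List ℕ) :
    ins1L r (k :: ks) =
      ((ins1L (ins1 r k).1 ks).1, (ins1 r k).2.elim (ins1L (ins1 r k).1 ks).2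
        (· :: (ins1L (ins1 r k).1 ks).2)) := rfl

lemma foldl_insertT_cons (r : List ℕ) (rest : List (List ℕ)) (l : List ℕ) :
    List.foldl insertT (r :: rest) l =
      (ins1L r l).1 :: List.foldl insertT rest (ins1L r l).2 := by
  induction l generalizing r rest with
  | nil => simp
  | cons k ks IH =>
    rw [List.foldl_cons, insertT_cons, ins1L_cons]
    rcases h : (ins1 r k).2 with _ | b
    · simp only [h, Option.elim]
      exact IH _ _
    · simp only [h, Option.elim]
      rw [IH, List.foldl_cons]

abbrev SortedR (r : List ℕ) : Prop := List.Pairwise (· ≤ ·) r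

lemma ins1_bump_gt {r : List ℕ} {k b : ℕ} (h : (ins1 r k).2 = some b) : k < b := by
  induction r with
  | nil => simp at h
  | cons a r IH =>
    by_cases hk : k < a
    · rw [ins1_cons_lt hk] at h
      simp at h; omega
    · rw [ins1_cons_ge hk] at h
      exact IH h

lemma ins1_bump_mem {r : List ℕ} {k b : ℕ} (h : (ins1 r k).2 = some b) : b ∈ r := by
  induction r with
  | nil => simp at h
  | cons a r IH =>
    by_cases hk : k < a
    · rw [ins1_cons_lt hk] at h
      simp at h; simp [h]
    · rw [ins1_cons_ge hk] at h
      exact List.mem_cons_of_mem _ (IH h)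

lemma ins1_mem {r : List ℕ} {k e : ℕ} (he : e ∈ (ins1 r k).1) : e ∈ r ∨ e = k := by
  induction r with
  | nil => simp at he; right; exact he
  | cons a r IH =>
    by_cases hk : k < a
    · rw [ins1_cons_lt hk] at he
      rcases List.mem_cons.1 he with h | h
      · right; exact h
      · left; exact List.mem_cons_of_mem _ h
    · rw [ins1_cons_ge hk] at he
      rcases List.mem_cons.1 he with h | h
      · left; simp [h]
      · rcases IH h with h' | h'
        · left; exact List.mem_cons_of_mem _ h'
        · right; exact h'

lemma ins1_none_of_all_le {r : List ℕ} {k : ℕ} (h : ∀ e ∈ r, e ≤ k) :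
    ins1 r k = (r ++ [k], none) := by
  induction r with
  | nil => simp
  | cons a r IH =>
    have ha : ¬ k < a := by
      have := h a (List.mem_cons_self); omega
    rw [ins1_cons_ge ha, IH (fun e he => h e (List.mem_cons_of_mem _ he))]
    simp

lemma ins1_all_le_of_none {r : List ℕ} {k : ℕ} (h : (ins1 r k).2 = none) :
    ∀ e ∈ r, e ≤ k := by
  induction r with
  | nil => simp
  | cons a r IH =>
    by_cases hk : k < a
    · rw [ins1_cons_lt hk] at h; simp at h
    · rw [ins1_cons_ge hk] at h
      intro e he
      rcases List.mem_cons.1 he with h' | h'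
      · omega
      · exact IH h e h'

lemma ins1_sorted {r : List ℕ} {k : ℕ} (h : SortedR r) : SortedR (ins1 r k).1 := by
  induction r with
  | nil => exact List.pairwise_singleton _ _
  | cons a r IH =>
    replace h := List.pairwise_cons.mp h
    by_cases hk : k < a
    · rw [ins1_cons_lt hk]
      refine List.pairwise_cons.mpr ⟨fun b hb => le_trans (le_of_lt hk) (h.1 b hb), h.2⟩
    · rw [ins1_cons_ge hk]
      refine List.pairwise_cons.mpr ⟨fun b hb => ?_, IH h.2⟩
      rcases ins1_mem hb with h' | h'
      · exact h.1 b h'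
      · omega
    
lemma ins1_min_bump {r : List ℕ} {k b : ℕ} (hr : SortedR r) (h : (ins1 r k).2 = some b) :
    ∀ e ∈ r, k < e → b ≤ e := by
  induction r with
  | nil => simp at h
  | cons a r IH =>
    replace hr := List.pairwise_cons.mp hr
    by_cases hk : k < a
    · rw [ins1_cons_lt hk] at h
      simp at h
      intro e he _
      rcases List.mem_cons.1 he with h' | h'
      · omega
      · subst h; exact hr.1 e h'
    · rw [ins1_cons_ge hk] at h
      intro e he hke
      rcases List.mem_cons.1 he with h' | h'
      · omega
      · exact IH hr.2 h e h' hke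

lemma ins1_second {r : List ℕ} {z y b : ℕ} (hr : SortedR r) (h : (ins1 r z).2 = some b)
    (hyz : y < z) :
    ∃ c, (ins1 (ins1 r z).1 y).2 = some c ∧ y < c ∧ c ≤ z := by
  induction r with
  | nil => simp at h
  | cons a r IH =>
    replace hr := List.pairwise_cons.mp hr
    by_cases hz : z < a
    · rw [ins1_cons_lt hz]
      rw [ins1_cons_lt hyz]
      exact ⟨z, rfl, hyz, le_refl z⟩
    · rw [ins1_cons_ge hz] at h ⊢
      by_cases hy : y < a
      · rw [ins1_cons_lt hy]
        exact ⟨a, rfl, hy, by omega⟩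
      · rw [ins1_cons_ge hy]
        exact IH hr.2 h

def tl3 (t : ℕ × ℕ × ℕ) : List ℕ := [t.1, t.2.1, t.2.2]

def KR (t1 t2 : ℕ × ℕ × ℕ) : Prop :=
  (∃ x y z, x ≤ y ∧ y < z ∧ t1 = (x, z, y) ∧ t2 = (z, x, y)) ∨
  (∃ x y z, x < y ∧ y ≤ z ∧ t1 = (y, x, z) ∧ t2 = (y, z, x))

def KR2 (l1 l2 : List ℕ) : Prop :=
  l1 = l2 ∨ ∃ u1 u2, KR u1 u2 ∧ ((l1 = tl3 u1 ∧ l2 = tl3 u2) ∨ (l1 = tl3 u2 ∧ l2 = tl3 u1))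

lemma ins1L_pass {a : ℕ} {l : List ℕ} (h : ∀ k ∈ l, ¬ k < a) (r : List ℕ) :
    ins1L (a :: r) l = (a :: (ins1L r l).1, (ins1L r l).2) := by
  induction l generalizing r with
  | nil => simp
  | cons k ks IH =>
    rw [ins1L_cons, ins1_cons_ge (h k (List.mem_cons_self)),
      IH (fun k hk => h k (List.mem_cons_of_mem _ hk)) (ins1 r k).1, ins1L_cons]

lemma row_knuth1 (x y z : ℕ) (hxy : x ≤ y) (hyz : y < z) (r : List ℕ) (hr : SortedR r) :
    (ins1L r [x, z, y]).1 = (ins1L r [z, x, y]).1 ∧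
      KR2 (ins1L r [x, z, y]).2 (ins1L r [z, x, y]).2 := by
  have hzx : ¬ z < x := by omega
  have hyx : ¬ y < x := by omega
  have hxz : x < z := by omega
  induction r with
  | nil =>
    constructor
    · simp [ins1L_cons, ins1, hzx, hyx, hyz, hxz]
    · left
      simp [ins1L_cons, ins1, hzx, hyx, hyz, hxz]
  | cons a r IH =>
    replace hr := List.pairwise_cons.mp hr
    by_cases hxa : x < a
    · by_cases hza : z < a
      · -- case z < a : split on r
        rcases r with _ | ⟨b, r'⟩
        · constructor
          · simp [ins1L_cons, ins1, hxa, hza, hzx, hyx, hyz, hxz]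
          · left
            simp [ins1L_cons, ins1, hxa, hza, hzx, hyx, hyz, hxz]
        · have hab : a ≤ b := hr.1 b (List.mem_cons_self)
          have hzb : z < b := by omega
          have hyb : y < b := by omega
          have hxb : x < b := by omega
          constructor
          · simp [ins1L_cons, ins1, hxa, hza, hzx, hyx, hyz, hxz, hzb, hyb, hxb]
          · right
            refine ⟨(a, z, b), (a, b, z), Or.inr ⟨z, a, b, hza, hab, rfl, rfl⟩, Or.inr ?_⟩
            constructor
            · simp [ins1L_cons, ins1, hxa, hza, hzx, hyx, hyz, hxz, hzb, hyb, hxb, tl3]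
            · simp [ins1L_cons, ins1, hxa, hza, hzx, hyx, hyz, hxz, hzb, hyb, hxb, tl3]
      · -- merged case x < a ≤ z
        constructor
        · simp [ins1L_cons, ins1_cons_lt hxa, ins1_cons_ge hzx, ins1_cons_ge hyx,
            ins1_cons_ge hza]
        · rcases hbz : (ins1 r z).2 with _ | b
          · left
            simp [ins1L_cons, ins1_cons_lt hxa, ins1_cons_ge hzx, ins1_cons_ge hyx,
              ins1_cons_ge hza, hbz]
          · obtain ⟨c, hc, hyc, hcz⟩ := ins1_second hr.2 hbz hyz
            have hzb : z < b := ins1_bump_gt hbz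
            have hac : a ≤ c := by
              have hmem := ins1_bump_mem hc
              rcases ins1_mem hmem with h' | h'
              · exact hr.1 c h'
              · omega
            right
            refine ⟨(a, b, c), (b, a, c), Or.inl ⟨a, c, b, hac, by omega, rfl, rfl⟩,
              Or.inl ⟨?_, ?_⟩⟩
            · simp [ins1L_cons, ins1_cons_lt hxa, ins1_cons_ge hzx, ins1_cons_ge hyx,
                hbz, hc, tl3]
            · simp [ins1L_cons, ins1_cons_lt hxa, ins1_cons_ge hzx, ins1_cons_ge hyx,
                ins1_cons_ge hza, hbz, hc, tl3]
    · -- pass case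
      have hpass : ∀ k ∈ [x, z, y], ¬ k < a := by
        intro k hk
        simp at hk
        rcases hk with h | h | h <;> omega
      have hpass2 : ∀ k ∈ [z, x, y], ¬ k < a := by
        intro k hk
        simp at hk
        rcases hk with h | h | h <;> omega
      rw [ins1L_pass hpass, ins1L_pass hpass2]
      obtain ⟨e1, e2⟩ := IH hr.2
      exact ⟨by rw [e1], e2⟩

lemma row_knuth2 (x y z : ℕ) (hxy : x < y) (hyz : y ≤ z) (r : List ℕ) (hr : SortedR r) :
    (ins1L r [y, x, z]).1 = (ins1L r [y, z, x]).1 ∧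
      KR2 (ins1L r [y, x, z]).2 (ins1L r [y, z, x]).2 := by
  have hzx : ¬ z < x := by omega
  have hzy : ¬ z < y := by omega
  induction r with
  | nil =>
    constructor
    · simp [ins1L_cons, ins1, hzx, hzy, hxy]
    · left
      simp [ins1L_cons, ins1, hzx, hzy, hxy]
  | cons a r IH =>
    replace hr := List.pairwise_cons.mp hr
    by_cases hxa : x < a
    · by_cases hya : y < a
      · -- case y < a
        constructor
        · simp [ins1L_cons, ins1_cons_lt hya, ins1_cons_lt hxy, ins1_cons_ge hzx,
            ins1_cons_ge hzy]
        · rcases hbz : (ins1 r z).2 with _ | b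
          · left
            simp [ins1L_cons, ins1_cons_lt hya, ins1_cons_lt hxy, ins1_cons_ge hzx,
              ins1_cons_ge hzy, hbz]
          · have hzb : z < b := ins1_bump_gt hbz
            have hab : a ≤ b := hr.1 b (ins1_bump_mem hbz)
            right
            refine ⟨(a, y, b), (a, b, y), Or.inr ⟨y, a, b, hya, hab, rfl, rfl⟩,
              Or.inl ⟨?_, ?_⟩⟩
            · simp [ins1L_cons, ins1_cons_lt hya, ins1_cons_lt hxy, ins1_cons_ge hzx,
                hbz, tl3]
            · simp [ins1L_cons, ins1_cons_lt hya, ins1_cons_lt hxy, ins1_cons_ge hzy,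
                hbz, tl3]
      · -- case x < a ≤ y
        have hza : ¬ z < a := by omega
        constructor
        · simp [ins1L_cons, ins1_cons_ge hya, ins1_cons_lt hxa, ins1_cons_ge hzx,
            ins1_cons_ge hza]
        · rcases hby : (ins1 r y).2 with _ | b1
          · have hnone : ∀ e ∈ r, e ≤ y := ins1_all_le_of_none hby
            rcases hbz : (ins1 (ins1 r y).1 z).2 with _ | b2
            · left
              simp [ins1L_cons, ins1_cons_ge hya, ins1_cons_lt hxa, ins1_cons_ge hzx,
                ins1_cons_ge hza, hby, hbz]
            · exfalso
              have hzb2 : z < b2 := ins1_bump_gt hbz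
              rcases ins1_mem (ins1_bump_mem hbz) with h' | h'
              · have := hnone b2 h'; omega
              · omega
          · have hyb1 : y < b1 := ins1_bump_gt hby
            rcases hbz : (ins1 (ins1 r y).1 z).2 with _ | b2
            · left
              simp [ins1L_cons, ins1_cons_ge hya, ins1_cons_lt hxa, ins1_cons_ge hzx,
                ins1_cons_ge hza, hby, hbz]
            · have hzb2 : z < b2 := ins1_bump_gt hbz
              have hb2r : b2 ∈ r := by
                rcases ins1_mem (ins1_bump_mem hbz) with h' | h'
                · exact h'
                · omega
              have hb1b2 : b1 ≤ b2 := ins1_min_bump hr.2 hby b2 hb2r (by omega)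
              right
              refine ⟨(b1, a, b2), (b1, b2, a), Or.inr ⟨a, b1, b2, by omega, hb1b2, rfl, rfl⟩,
                Or.inl ⟨?_, ?_⟩⟩
              · simp [ins1L_cons, ins1_cons_ge hya, ins1_cons_lt hxa, ins1_cons_ge hzx,
                  hby, hbz, tl3]
              · simp [ins1L_cons, ins1_cons_ge hya, ins1_cons_lt hxa, ins1_cons_ge hza,
                  hby, hbz, tl3]
    · -- pass case
      have hpass : ∀ k ∈ [y, x, z], ¬ k < a := by
        intro k hk
        simp at hk
        rcases hk with h | h | h <;> omega
      have hpass2 : ∀ k ∈ [y, z, x], ¬ k < a := by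
        intro k hk
        simp at hk
        rcases hk with h | h | h <;> omega
      rw [ins1L_pass hpass, ins1L_pass hpass2]
      obtain ⟨e1, e2⟩ := IH hr.2
      exact ⟨by rw [e1], e2⟩

lemma row_knuth {t1 t2 : ℕ × ℕ × ℕ} (h : KR t1 t2) (r : List ℕ) (hr : SortedR r) :
    (ins1L r (tl3 t1)).1 = (ins1L r (tl3 t2)).1 ∧
      KR2 (ins1L r (tl3 t1)).2 (ins1L r (tl3 t2)).2 := by
  rcases h with ⟨x, y, z, hxy, hyz, rfl, rfl⟩ | ⟨x, y, z, hxy, hyz, rfl, rfl⟩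
  · exact row_knuth1 x y z hxy hyz r hr
  · exact row_knuth2 x y z hxy hyz r hr

def rowsSorted (T : List (List ℕ)) : Prop := ∀ r ∈ T, SortedR r

lemma insertT_rowsSorted {T : List (List ℕ)} (h : rowsSorted T) (k : ℕ) :
    rowsSorted (insertT T k) := by
  induction T generalizing k with
  | nil =>
    intro r hr
    simp [insertT] at hr
    rw [hr]; exact List.pairwise_singleton _ _
  | cons r rest IH =>
    rw [insertT_cons]
    rcases hb : (ins1 r k).2 with _ | b
    · intro q hq
      rcases List.mem_cons.1 hq with h' | h'
      · subst h'; exact ins1_sorted (h r (List.mem_cons_self))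
      · exact h q (List.mem_cons_of_mem _ h')
    · intro q hq
      rcases List.mem_cons.1 hq with h' | h'
      · subst h'; exact ins1_sorted (h r (List.mem_cons_self))
      · exact IH (fun q' hq' => h q' (List.mem_cons_of_mem _ hq')) b q h'

lemma foldl_insertT_rowsSorted {T : List (List ℕ)} (h : rowsSorted T) (l : List ℕ) :
    rowsSorted (List.foldl insertT T l) := by
  induction l generalizing T with
  | nil => exact h
  | cons k ks IH => exact IH (insertT_rowsSorted h k)

lemma tableau_knuth : ∀ T : List (List ℕ), rowsSorted T →
    ∀ l1 l2 : List ℕ, KR2 l1 l2 →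
      List.foldl insertT T l1 = List.foldl insertT T l2 := by
  intro T
  induction T with
  | nil =>
    intro _ l1 l2 h
    rcases h with rfl | ⟨u1, u2, hu, hor⟩
    · rfl
    · have key : ∀ u1 u2 : ℕ × ℕ × ℕ, KR u1 u2 →
          List.foldl insertT [] (tl3 u1) = List.foldl insertT [] (tl3 u2) := by
        intro u1 u2 hu
        rcases hu with ⟨x, y, z, hxy, hyz, rfl, rfl⟩ | ⟨x, y, z, hxy, hyz, rfl, rfl⟩
        · have h1 : ¬ z < x := by omega
          have h2 : ¬ y < x := by omega
          simp [tl3, insertT_nil, insertT_cons, ins1_nil, ins1_cons_ge h1, ins1_cons_ge h2,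
            ins1_cons_lt hyz, ins1_cons_lt (show x < z by omega)]
        · have h1 : ¬ z < x := by omega
          have h2 : ¬ z < y := by omega
          simp [tl3, insertT_nil, insertT_cons, ins1_nil, ins1_cons_ge h1, ins1_cons_ge h2,
            ins1_cons_lt hxy, ins1_cons_lt (show x < z by omega)]
      rcases hor with ⟨rfl, rfl⟩ | ⟨rfl, rfl⟩
      · exact key u1 u2 hu
      · exact (key u1 u2 hu).symm
  | cons r rest IH =>
    intro hT l1 l2 h
    have hrest : rowsSorted rest := fun q hq => hT q (List.mem_cons_of_mem _ hq)
    have hr : SortedR r := hT r (List.mem_cons_self)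
    rcases h with rfl | ⟨u1, u2, hu, hor⟩
    · rfl
    · obtain ⟨e1, e2⟩ := row_knuth hu r hr
      rcases hor with ⟨rfl, rfl⟩ | ⟨rfl, rfl⟩
      · rw [foldl_insertT_cons, foldl_insertT_cons, e1, IH hrest _ _ e2]
      · rw [foldl_insertT_cons, foldl_insertT_cons, e1, IH hrest _ _ e2]

lemma knuth_move (A B : List ℕ) {t1 t2 : ℕ × ℕ × ℕ} (h : KR t1 t2) :
    List.foldl insertT [] (A ++ (tl3 t1 ++ B)) =
      List.foldl insertT [] (A ++ (tl3 t2 ++ B)) := by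
  rw [List.foldl_append, List.foldl_append, List.foldl_append, List.foldl_append]
  have hT : rowsSorted (List.foldl insertT [] A) :=
    foldl_insertT_rowsSorted (by intro r hr; simp at hr) A
  rw [tableau_knuth _ hT (tl3 t1) (tl3 t2) (Or.inr ⟨t1, t2, h, Or.inl ⟨rfl, rfl⟩⟩)]



def invF (n : ℕ) (w : Equiv.Perm (Fin n)) : Finset (Fin n × Fin n) :=
  Finset.univ.filter (fun x => x.1 < x.2 ∧ w x.2 < w x.1)

def nInv (n : ℕ) (w : Equiv.Perm (Fin n)) : ℕ := (invF n w).card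

lemma s_eq {n p : ℕ} (hp : p + 1 < n) :
    s n p = Equiv.swap ⟨p, Nat.lt_of_succ_lt hp⟩ ⟨p + 1, hp⟩ := dif_pos hp

lemma s_mul_s {n p : ℕ} (hp : p + 1 < n) : s n p * s n p = 1 := by
  rw [s_eq hp]; exact Equiv.swap_mul_self _ _

lemma s_inv {n p : ℕ} (hp : p + 1 < n) : (s n p)⁻¹ = s n p := by
  rw [s_eq hp]; exact Equiv.swap_inv _ _

lemma s_val {n p : ℕ} (hp : p + 1 < n) (x : Fin n) :
    ((s n p) x).val = if x.val = p then p + 1 else if x.val = p + 1 then p else x.val := by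
  rw [s_eq hp]
  rcases eq_or_ne x ⟨p, Nat.lt_of_succ_lt hp⟩ with hx | hx
  · subst hx; rw [Equiv.swap_apply_left]; simp
  · rcases eq_or_ne x ⟨p + 1, hp⟩ with hx' | hx'
    · subst hx'; rw [Equiv.swap_apply_right]
      simp [Fin.ext_iff] at hx ⊢
    · rw [Equiv.swap_apply_of_ne_of_ne hx hx']
      simp [Fin.ext_iff] at hx hx'
      simp [hx, hx']

lemma swap_pair_lt {n p : ℕ} (hp : p + 1 < n) {a b : Fin n} (hab : a < b)
    (hne : ¬(a.val = p ∧ b.val = p + 1)) : s n p a < s n p b := by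
  have ha := s_val hp a
  have hb := s_val hp b
  have hne' : ¬(a.val = p) ∨ ¬(b.val = p + 1) := by tauto
  rw [Fin.lt_def] at hab ⊢
  rw [ha, hb]
  split_ifs <;> omega

lemma s_apply_s {n p : ℕ} (hp : p + 1 < n) (x : Fin n) : s n p (s n p x) = x := by
  rw [s_eq hp]; exact Equiv.swap_apply_self _ _ _

lemma nInv_mul_s_of_lt {n p : ℕ} (hp : p + 1 < n) {w : Equiv.Perm (Fin n)}
    (hlt : w ⟨p, Nat.lt_of_succ_lt hp⟩ < w ⟨p + 1, hp⟩) :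
    nInv n (w * s n p) = nInv n w + 1 := by
  set P : Fin n := ⟨p, Nat.lt_of_succ_lt hp⟩ with hP
  set P1 : Fin n := ⟨p + 1, hp⟩ with hP1
  have hPP1 : P < P1 := by rw [Fin.lt_def]; simp [hP, hP1]
  have hsP : s n p P = P1 := by rw [s_eq hp]; exact Equiv.swap_apply_left _ _
  have hsP1 : s n p P1 = P := by rw [s_eq hp]; exact Equiv.swap_apply_right _ _
  have hset : invF n (w * s n p) =
      insert (P, P1) ((invF n w).image (fun x => (s n p x.1, s n p x.2))) := by
    ext ⟨a, b⟩
    simp only [invF, Finset.mem_insert, Finset.mem_image, Finset.mem_filter,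
      Finset.mem_univ, true_and]
    simp only [Equiv.Perm.mul_apply, Prod.mk.injEq, Prod.exists]
    constructor
    · rintro ⟨hab, hwab⟩
      by_cases hPab : a = P ∧ b = P1
      · left; exact ⟨hPab.1, hPab.2⟩
      · right
        refine ⟨s n p a, s n p b, ⟨?_, ?_⟩, ?_, ?_⟩
        · apply swap_pair_lt hp hab
          intro hc
          exact hPab ⟨Fin.ext hc.1, Fin.ext hc.2⟩
        · exact hwab
        · exact s_apply_s hp a
        · exact s_apply_s hp b
    · rintro (⟨ha, hb⟩ | ⟨c, d, ⟨hcd, hwcd⟩, ha, hb⟩)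
      · subst ha; subst hb
        exact ⟨hPP1, by rw [hsP, hsP1]; exact hlt⟩
      · subst ha; subst hb
        have hne : ¬(c.val = p ∧ d.val = p + 1) := by
          rintro ⟨hc, hd⟩
          have hc' : c = P := Fin.ext hc
          have hd' : d = P1 := Fin.ext hd
          subst hc'; subst hd'
          exact absurd hwcd (not_lt.mpr (le_of_lt hlt))
        exact ⟨swap_pair_lt hp hcd hne, by rw [s_apply_s hp, s_apply_s hp]; exact hwcd⟩
  have hnotmem : (P, P1) ∉ (invF n w).image (fun x => (s n p x.1, s n p x.2)) := by
    simp only [Finset.mem_image, Prod.exists, Prod.mk.injEq]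
    rintro ⟨c, d, hmem, hc, hd⟩
    have hc' : c = P1 := by rw [← s_apply_s hp c, hc, hsP]
    have hd' : d = P := by rw [← s_apply_s hp d, hd, hsP1]
    subst hc'; subst hd'
    simp only [invF, Finset.mem_filter] at hmem
    exact absurd hmem.2.1 (not_lt.mpr (le_of_lt hPP1))
  have hinj : Function.Injective (fun x : Fin n × Fin n => (s n p x.1, s n p x.2)) := by
    rintro ⟨a, b⟩ ⟨c, d⟩ h
    simp only [Prod.mk.injEq] at h
    exact Prod.ext ((s n p).injective h.1) ((s n p).injective h.2)
  rw [nInv, hset, Finset.card_insert_of_notMem hnotmem,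
    Finset.card_image_of_injective _ hinj]
  rfl

lemma nInv_mul_s_of_gt {n p : ℕ} (hp : p + 1 < n) {w : Equiv.Perm (Fin n)}
    (hgt : w ⟨p + 1, hp⟩ < w ⟨p, Nat.lt_of_succ_lt hp⟩) :
    nInv n (w * s n p) + 1 = nInv n w := by
  have h1 : (w * s n p) ⟨p, Nat.lt_of_succ_lt hp⟩ < (w * s n p) ⟨p + 1, hp⟩ := by
    have e1 : s n p ⟨p, Nat.lt_of_succ_lt hp⟩ = ⟨p + 1, hp⟩ := by
      rw [s_eq hp]; exact Equiv.swap_apply_left _ _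
    have e2 : s n p ⟨p + 1, hp⟩ = ⟨p, Nat.lt_of_succ_lt hp⟩ := by
      rw [s_eq hp]; exact Equiv.swap_apply_right _ _
    simp only [Equiv.Perm.mul_apply, e1, e2]
    exact hgt
  have := nInv_mul_s_of_lt hp h1
  rw [mul_assoc, s_mul_s hp, mul_one] at this
  omega

lemma nInv_inv (n : ℕ) (w : Equiv.Perm (Fin n)) : nInv n w⁻¹ = nInv n w := by
  unfold nInv
  apply Finset.card_bij (fun x _ => ((w⁻¹ x.2 : Fin n), (w⁻¹ x.1 : Fin n)))
  · rintro ⟨a, b⟩ hmem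
    simp only [invF, Finset.mem_filter, Finset.mem_univ, true_and] at hmem ⊢
    refine ⟨hmem.2, ?_⟩
    simp only [Equiv.Perm.inv_def, Equiv.apply_symm_apply]
    exact hmem.1
  · rintro ⟨a, b⟩ ha ⟨c, d⟩ hc h
    simp only [Prod.mk.injEq] at h
    have h1 : b = d := w⁻¹.injective h.1
    have h2 : a = c := w⁻¹.injective h.2
    simp [h1, h2]
  · rintro ⟨a, b⟩ hmem
    refine ⟨(w b, w a), ?_, ?_⟩
    · simp only [invF, Finset.mem_filter, Finset.mem_univ, true_and] at hmem ⊢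
      refine ⟨hmem.2, ?_⟩
      simp only [Equiv.Perm.inv_def, Equiv.symm_apply_apply]
      exact hmem.1
    · simp

lemma nInv_mul_s_le {n p : ℕ} (hp : p + 1 < n) (w : Equiv.Perm (Fin n)) :
    nInv n (w * s n p) ≤ nInv n w + 1 := by
  rcases lt_trichotomy (w ⟨p, Nat.lt_of_succ_lt hp⟩) (w ⟨p + 1, hp⟩) with h | h | h
  · rw [nInv_mul_s_of_lt hp h]
  · exact absurd (w.injective h) (by simp [Fin.ext_iff])
  · have := nInv_mul_s_of_gt hp h; omega

lemma eq_one_of_nInv_zero {n : ℕ} {w : Equiv.Perm (Fin n)} (h : nInv n w = 0) : w = 1 := by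
  have hmono : StrictMono w := by
    intro a b hab
    have : (a, b) ∉ invF n w := by
      intro hmem
      have := Finset.card_eq_zero.mp h
      rw [this] at hmem
      exact absurd hmem (Finset.notMem_empty _)
    simp only [invF, Finset.mem_filter, Finset.mem_univ, true_and, not_and, not_lt] at this
    have hle := this hab
    rcases lt_or_eq_of_le hle with h' | h'
    · exact h'
    · exact absurd (w.injective h') (ne_of_lt hab)
  have : w = (1 : Equiv.Perm (Fin n)) := by
    apply Equiv.ext
    intro x
    have := (hmono.range_inj strictMono_id).mp
      (by rw [Set.range_eq_univ.mpr w.surjective, Set.range_id])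
    exact congrFun this x
  exact this

lemma exists_descent {n : ℕ} {w : Equiv.Perm (Fin n)} (h : w ≠ 1) :
    ∃ p, ∃ hp : p + 1 < n, w ⟨p + 1, hp⟩ < w ⟨p, Nat.lt_of_succ_lt hp⟩ := by
  by_contra hc
  push_neg at hc
  apply h
  rcases n with _ | m
  · apply Equiv.ext; intro x; exact absurd x.2 (Nat.not_lt_zero _)
  · have hmono : StrictMono w := by
      rw [Fin.strictMono_iff_lt_succ]
      intro i
      have hp : (i : ℕ) + 1 < m + 1 := by omega
      have := hc i.val hp
      have hcast : i.castSucc = ⟨(i : ℕ), Nat.lt_of_succ_lt hp⟩ := by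
        apply Fin.ext; simp
      have hsucc : i.succ = ⟨(i : ℕ) + 1, hp⟩ := by
        apply Fin.ext; simp
      rw [hcast, hsucc]
      rcases lt_trichotomy (w ⟨(i : ℕ), Nat.lt_of_succ_lt hp⟩) (w ⟨(i : ℕ) + 1, hp⟩)
        with h' | h' | h'
      · exact h'
      · exact absurd (w.injective h') (by simp [Fin.ext_iff])
      · exact absurd h' (not_lt.mpr this)
    apply Equiv.ext
    intro x
    exact congrFun ((hmono.range_inj strictMono_id).mp
      (by rw [Set.range_eq_univ.mpr w.surjective, Set.range_id])) x

lemma nInv_one (n : ℕ) : nInv n (1 : Equiv.Perm (Fin n)) = 0 := by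
  apply Finset.card_eq_zero.mpr
  ext ⟨a, b⟩
  simp only [invF, Finset.mem_filter, Finset.mem_univ, true_and, Finset.notMem_empty,
    iff_false, not_and, not_lt]
  simp only [Equiv.Perm.one_apply]
  exact le_of_lt

lemma exists_word (n : ℕ) : ∀ (m : ℕ) (w : Equiv.Perm (Fin n)), nInv n w = m →
    ∃ l : List ℕ, (∀ i ∈ l, i + 1 < n) ∧ l.length = nInv n w ∧ (l.map (s n)).prod = w := by
  intro m
  induction m using Nat.strong_induction_on with
  | _ m IH =>
    intro w hm
    rcases eq_or_ne w 1 with rfl | hw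
    · exact ⟨[], by simp, by simp [nInv_one], by simp⟩
    · obtain ⟨p, hp, hdesc⟩ := exists_descent hw
      have hrec := nInv_mul_s_of_gt hp hdesc
      have hlt : nInv n (w * s n p) < m := by omega
      obtain ⟨l, hl1, hl2, hl3⟩ := IH _ hlt (w * s n p) rfl
      refine ⟨l ++ [p], ?_, ?_, ?_⟩
      · intro i hi
        rcases List.mem_append.1 hi with h' | h'
        · exact hl1 i h'
        · simp at h'; subst h'; exact hp
      · simp [hl2]; omega
      · rw [List.map_append, List.prod_append]
        simp [hl3, mul_assoc, s_mul_s hp]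

lemma len_eq_nInv (n : ℕ) (w : Equiv.Perm (Fin n)) : len n w = nInv n w := by
  have hne : { r | ∃ l : List ℕ, (∀ i ∈ l, i + 1 < n) ∧ l.length = r ∧
      (l.map (s n)).prod = w }.Nonempty := by
    obtain ⟨l, h1, h2, h3⟩ := exists_word n (nInv n w) w rfl
    exact ⟨nInv n w, l, h1, h2, h3⟩
  apply le_antisymm
  · obtain ⟨l, h1, h2, h3⟩ := exists_word n (nInv n w) w rfl
    exact Nat.sInf_le ⟨l, h1, h2, h3⟩
  · obtain ⟨l, h1, h2, h3⟩ := Nat.sInf_mem hne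
    rw [len, ← h2, ← h3]
    clear h2 h3
    induction l with
    | nil => simp [nInv_one]
    | cons i l' IHl =>
      have hi : i + 1 < n := h1 i (List.mem_cons_self)
      have hrest := IHl (fun j hj => h1 j (List.mem_cons_of_mem _ hj))
      rw [List.map_cons, List.prod_cons, List.length_cons]
      set u := (l'.map (s n)).prod
      have e1 : nInv n (s n i * u) = nInv n (u⁻¹ * s n i) := by
        rw [← nInv_inv n (s n i * u), mul_inv_rev, s_inv hi]
      have e2 : nInv n (u⁻¹ * s n i) ≤ nInv n u⁻¹ + 1 := nInv_mul_s_le hi u⁻¹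
      rw [nInv_inv] at e2
      omega

lemma descent_iff {n j : ℕ} (hj : j + 1 < n) (w : Equiv.Perm (Fin n)) :
    len n (s n j * w) < len n w ↔ w⁻¹ ⟨j + 1, hj⟩ < w⁻¹ ⟨j, Nat.lt_of_succ_lt hj⟩ := by
  rw [len_eq_nInv, len_eq_nInv]
  have e1 : nInv n (s n j * w) = nInv n (w⁻¹ * s n j) := by
    rw [← nInv_inv n (s n j * w), mul_inv_rev, s_inv hj]
  rw [e1, ← nInv_inv n w]
  rcases lt_trichotomy (w⁻¹ ⟨j, Nat.lt_of_succ_lt hj⟩) (w⁻¹ ⟨j + 1, hj⟩) with h | h | h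
  · rw [nInv_mul_s_of_lt hj h]
    constructor
    · omega
    · intro h'; exact absurd h' (not_lt.mpr (le_of_lt h))
  · exact absurd (w⁻¹.injective h) (by simp [Fin.ext_iff])
  · have := nInv_mul_s_of_gt hj h
    constructor
    · intro _; exact h
    · intro _; omega


lemma word_getElem {n : ℕ} (u : Equiv.Perm (Fin n)) {k : ℕ} (hk : k < n)
    {h : k < (word n u).length} :
    (word n u)[k] = (u ⟨k, hk⟩).val + 1 := by
  simp [word, List.getElem_map, List.getElem_finRange]

lemma word_length {n : ℕ} (u : Equiv.Perm (Fin n)) : (word n u).length = n := by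
  simp [word]

lemma mul_s_apply_eq {n i : ℕ} (hi : i + 1 < n) (u : Equiv.Perm (Fin n)) {k m : ℕ}
    (hk : k < n) (hm : m < n)
    (h : (if k = i then i + 1 else if k = i + 1 then i else k) = m) :
    (u * s n i) ⟨k, hk⟩ = u ⟨m, hm⟩ := by
  rw [Equiv.Perm.mul_apply]
  congr 1
  apply Fin.ext
  rw [s_val hi]
  simpa using h

lemma take_word_eq {n i : ℕ} (hi : i + 1 < n) (u : Equiv.Perm (Fin n)) {m : ℕ}
    (hmi : m ≤ i) :
    (word n (u * s n i)).take m = (word n u).take m := by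
  apply List.ext_getElem
  · simp [word]
  · intro k h1 h2
    rw [List.getElem_take, List.getElem_take]
    have hkn : k < n := by
      have := h1; simp [word] at this; omega
    have hki : k < i := by
      have := h1; simp [word] at this; omega
    rw [word_getElem (u * s n i) hkn, word_getElem u hkn,
      mul_s_apply_eq hi u hkn hkn (by rw [if_neg (by omega), if_neg (by omega)])]

lemma drop_word_eq {n i : ℕ} (hi : i + 1 < n) (u : Equiv.Perm (Fin n)) {m : ℕ}
    (hmi : i + 2 ≤ m) :
    (word n (u * s n i)).drop m = (word n u).drop m := by
  apply List.ext_getElem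
  · simp [word]
  · intro k h1 h2
    rw [List.getElem_drop, List.getElem_drop]
    have hkn : m + k < n := by
      have := h1; simp [word] at this; omega
    rw [word_getElem (u * s n i) hkn, word_getElem u hkn,
      mul_s_apply_eq hi u hkn hkn (by rw [if_neg (by omega), if_neg (by omega)])]

lemma word_decomp {n : ℕ} (u : Equiv.Perm (Fin n)) (m : ℕ) (hm : m + 3 ≤ n) :
    word n u = (word n u).take m ++
      ([(u ⟨m, by omega⟩).val + 1, (u ⟨m + 1, by omega⟩).val + 1,
        (u ⟨m + 2, by omega⟩).val + 1] ++ (word n u).drop (m + 3)) := by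
  conv_lhs => rw [← List.take_append_drop m (word n u)]
  congr 1
  rw [List.drop_eq_getElem_cons (by rw [word_length]; omega)]
  rw [List.drop_eq_getElem_cons (by rw [word_length]; omega)]
  rw [List.drop_eq_getElem_cons (by rw [word_length]; omega)]
  rw [word_getElem u (show m < n by omega), word_getElem u (show m + 1 < n by omega),
    word_getElem u (show m + 2 < n by omega)]
  rfl

lemma word_swap_decomp_b {n j : ℕ} (hi : j + 1 + 1 < n) (hd : j + 3 ≤ n)
    (u : Equiv.Perm (Fin n)) :
    word n (u * s n (j + 1)) = (word n u).take j ++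
        ([(u ⟨j, by omega⟩).val + 1, (u ⟨j + 2, by omega⟩).val + 1,
          (u ⟨j + 1, by omega⟩).val + 1] ++ (word n u).drop (j + 3)) := by
  rw [word_decomp (u * s n (j + 1)) j hd, take_word_eq hi u (by omega),
    drop_word_eq hi u (by omega),
    mul_s_apply_eq (k := j) (m := j) hi u (by omega) (by omega)
      (by split_ifs <;> omega),
    mul_s_apply_eq (k := j + 1) (m := j + 2) hi u (by omega) (by omega)
      (by split_ifs <;> omega),
    mul_s_apply_eq (k := j + 2) (m := j + 1) hi u (by omega) (by omega)
      (by split_ifs <;> omega)]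

lemma word_swap_decomp_c {n i : ℕ} (hi : i + 1 < n) (hd : i + 3 ≤ n)
    (u : Equiv.Perm (Fin n)) :
    word n (u * s n i) = (word n u).take i ++
        ([(u ⟨i + 1, by omega⟩).val + 1, (u ⟨i, by omega⟩).val + 1,
          (u ⟨i + 2, by omega⟩).val + 1] ++ (word n u).drop (i + 3)) := by
  rw [word_decomp (u * s n i) i hd, take_word_eq hi u (by omega),
    drop_word_eq hi u (by omega),
    mul_s_apply_eq (k := i) (m := i + 1) hi u (by omega) (by omega)
      (by split_ifs <;> omega),
    mul_s_apply_eq (k := i + 1) (m := i) hi u (by omega) (by omega)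
      (by split_ifs <;> omega),
    mul_s_apply_eq (k := i + 2) (m := i + 2) hi u (by omega) (by omega)
      (by split_ifs <;> omega)]

lemma len_le_of_bruhatLE {n : ℕ} {y w : Equiv.Perm (Fin n)} (h : bruhatLE n y w) :
    len n y ≤ len n w := by
  induction h with
  | refl => exact le_refl _
  | tail _ hlast IH => exact le_trans IH (le_of_lt hlast.2)

lemma len_lt_of_bruhatLT {n : ℕ} {y w : Equiv.Perm (Fin n)} (h : bruhatLT n y w) :
    len n y < len n w := by
  obtain ⟨hle, hne⟩ := h
  rcases Relation.ReflTransGen.cases_head hle with rfl | ⟨c, hstep, hrest⟩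
  · exact absurd rfl hne
  · exact lt_of_lt_of_le hstep.2 (len_le_of_bruhatLE hrest)

lemma Psymb_eq_foldl (n : ℕ) (u : Equiv.Perm (Fin n)) :
    Psymb n u = List.foldl insertT [] (word n u) := rfl

end KLProof

open KLPaper KLProof

/-- If `w ∈ Sₙ` satisfies `w < sᵢw` and `L(w) ⊄ L(sᵢw)`, then `w⁻¹` and `w⁻¹sᵢ` have the
same P-symbol: `P(w⁻¹) = P(w⁻¹sᵢ)`. -/
theorem KLPaper.Psymb_inv_eq (n : ℕ) (i : ℕ) (hi : i + 1 < n) (w : Equiv.Perm (Fin n))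
    (h1 : KLPaper.bruhatLT n w (KLPaper.s n i * w))
    (h2 : ¬ KLPaper.LD n w ⊆ KLPaper.LD n (KLPaper.s n i * w)) :
    KLPaper.Psymb n w⁻¹ = KLPaper.Psymb n (w⁻¹ * KLPaper.s n i) := by
  classical
  have hi' : i < n := Nat.lt_of_succ_lt hi
  set u := w⁻¹ with hu
  clear_value u
  have hlen1 : len n w < len n (s n i * w) := len_lt_of_bruhatLT h1
  have hx : s n i * (s n i * w) = w := by rw [← mul_assoc, s_mul_s hi, one_mul]
  have hinv : (s n i * w)⁻¹ = u * s n i := by rw [mul_inv_rev, s_inv hi, hu]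
  have key1 : u ⟨i, hi'⟩ < u ⟨i + 1, hi⟩ := by
    have h0 := (descent_iff hi (s n i * w)).mp (by rw [hx]; exact hlen1)
    rw [hinv, mul_s_apply_eq (k := i + 1) (m := i) hi u hi hi' (by split_ifs <;> omega),
      mul_s_apply_eq (k := i) (m := i + 1) hi u hi' hi (by split_ifs <;> omega)] at h0
    exact h0
  obtain ⟨j, hjLD, hjnot⟩ := Set.not_subset.mp h2
  obtain ⟨hj, hlenj⟩ := hjLD
  have hj' : j < n := Nat.lt_of_succ_lt hj
  have key2 : u ⟨j + 1, hj⟩ < u ⟨j, hj'⟩ := by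
    have := (descent_iff hj w).mp hlenj
    rw [← hu] at this
    exact this
  have hnot : ¬ len n (s n j * (s n i * w)) < len n (s n i * w) := fun hc => hjnot ⟨hj, hc⟩
  have key3 : (u * s n i) ⟨j, hj'⟩ < (u * s n i) ⟨j + 1, hj⟩ := by
    have h0 : ¬ ((s n i * w)⁻¹ ⟨j + 1, hj⟩ < (s n i * w)⁻¹ ⟨j, hj'⟩) :=
      fun hc => hnot ((descent_iff hj _).mpr hc)
    rw [hinv] at h0
    refine lt_of_le_of_ne (not_lt.mp h0) fun he => ?_
    have := (u * s n i).injective he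
    simp [Fin.ext_iff] at this
  have hji : j ≠ i := by
    intro he
    subst he
    exact absurd key1 (not_lt.mpr (le_of_lt key2))
  by_cases hc1 : j + 1 = i
  · -- triple at positions j, j+1, j+2 ; swap acts at positions i = j+1 and i+1 = j+2
    subst hc1
    have hd : j + 3 ≤ n := by omega
    have hjn2 : j + 2 < n := by omega
    have e_u := word_decomp u j hd
    have key3' : u ⟨j, hj'⟩ < u ⟨j + 2, hjn2⟩ := by
      rw [mul_s_apply_eq (k := j) (m := j) hi u hj' hj' (by split_ifs <;> omega),
        mul_s_apply_eq (k := j + 1) (m := j + 2) hi u hj hjn2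
          (by split_ifs <;> omega)] at key3
      exact key3
    have e_us := word_swap_decomp_b hi hd u
    rw [Psymb_eq_foldl, Psymb_eq_foldl, e_u, e_us]
    exact knuth_move _ _
      (t1 := ((u ⟨j, by omega⟩).val + 1, (u ⟨j + 1, by omega⟩).val + 1,
        (u ⟨j + 2, by omega⟩).val + 1))
      (t2 := ((u ⟨j, by omega⟩).val + 1, (u ⟨j + 2, by omega⟩).val + 1,
        (u ⟨j + 1, by omega⟩).val + 1))
      (Or.inr ⟨(u ⟨j + 1, by omega⟩).val + 1, (u ⟨j, by omega⟩).val + 1,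
        (u ⟨j + 2, by omega⟩).val + 1,
        Nat.add_lt_add_right key2 1, le_of_lt (Nat.add_lt_add_right key3' 1), rfl, rfl⟩)
  · have hc2 : j = i + 1 := by
      -- otherwise s n i fixes both ⟨j⟩ and ⟨j+1⟩, contradicting key2/key3
      by_contra hc2
      have key3' : u ⟨j, hj'⟩ < u ⟨j + 1, hj⟩ := by
        rw [mul_s_apply_eq (k := j) (m := j) hi u hj' hj' (by split_ifs <;> omega),
          mul_s_apply_eq (k := j + 1) (m := j + 1) hi u hj hj
            (by split_ifs <;> omega)] at key3
        exact key3
      exact absurd key3' (not_lt.mpr (le_of_lt key2))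
    subst hc2
    -- triple at positions i, i+1, i+2 ; swap acts at positions i, i+1
    have hd : i + 3 ≤ n := by omega
    have hin2 : i + 2 < n := by omega
    have e_u := word_decomp u i hd
    have key3' : u ⟨i, hi'⟩ < u ⟨i + 2, hin2⟩ := by
      rw [mul_s_apply_eq (k := i + 1) (m := i) hi u hj' hi' (by split_ifs <;> omega),
        mul_s_apply_eq (k := i + 1 + 1) (m := i + 2) hi u hj hin2
          (by split_ifs <;> omega)] at key3
      exact key3
    have e_us := word_swap_decomp_c hi hd u
    rw [Psymb_eq_foldl, Psymb_eq_foldl, e_u, e_us]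
    exact knuth_move _ _
      (t1 := ((u ⟨i, by omega⟩).val + 1, (u ⟨i + 1, by omega⟩).val + 1,
        (u ⟨i + 2, by omega⟩).val + 1))
      (t2 := ((u ⟨i + 1, by omega⟩).val + 1, (u ⟨i, by omega⟩).val + 1,
        (u ⟨i + 2, by omega⟩).val + 1))
      (Or.inl ⟨(u ⟨i, by omega⟩).val + 1, (u ⟨i + 2, by omega⟩).val + 1,
        (u ⟨i + 1, by omega⟩).val + 1,
        le_of_lt (Nat.add_lt_add_right key3' 1), Nat.add_lt_add_right key2 1, rfl, rfl⟩)
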